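/- The negativity of the OQ is monotone under decoherence: for the channel E_s(ρ) = (1−s)ρ + s D(ρ), where D(ρ) = Σ_i A_i ρ A_i is full dephasing in the basis of the projective measurement {A_i} and s ∈ [0,1], one has N[q^OQ(E_s(ρ))] ≤ N[q^OQ(ρ)]. -/

import Mathlib

open Matrix ComplexOrder

-- diag entries of PSD are nonneg
lemma psd_diag_nonneg {d : ℕ} {M : Matrix (Fin d) (Fin d) ℂ} (hM : M.PosSemidef) (i : Fin d) :
    0 ≤ M i i := by
  exact hM.diag_nonneg

lemma psd_trace_nonneg {d : ℕ} {M : Matrix (Fin d) (Fin d) ℂ} (hM : M.PosSemidef) :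
    0 ≤ M.trace := by
  exact Finset.sum_nonneg fun i _ => psd_diag_nonneg hM i

lemma psd_trace_mul_nonneg {d : ℕ} {X Y : Matrix (Fin d) (Fin d) ℂ}
    (hX : X.PosSemidef) (hY : Y.PosSemidef) : 0 ≤ (X * Y).trace := by
  obtain ⟨S, hS⟩ : ∃ S : Matrix (Fin d) (Fin d) ℂ, Y = star S * S := by
    open scoped MatrixOrder in
    exact CStarAlgebra.nonneg_iff_eq_star_mul_self.mp hY.nonneg
  have : (X * Y).trace = (S * X * Sᴴ).trace := by
    rw [hS, Matrix.star_eq_conjTranspose, ← Matrix.mul_assoc, Matrix.trace_mul_cycle]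
  rw [this]
  exact psd_trace_nonneg (hX.mul_mul_conjTranspose_same S)

lemma trace_ctc_eq_zero {d : ℕ} {C : Matrix (Fin d) (Fin d) ℂ}
    (h : (Cᴴ * C).trace = 0) : C = 0 := by
  have hE : (Cᴴ * C).trace = ∑ j, ∑ k, (Complex.normSq (C k j) : ℂ) := by
    simp [Matrix.trace, Matrix.diag, Matrix.mul_apply, Matrix.conjTranspose_apply,
      Complex.normSq_eq_conj_mul_self]
  rw [hE] at h
  have h' : ∑ j, ∑ k, Complex.normSq (C k j) = 0 := by
    exact_mod_cast h
  have := (Finset.sum_eq_zero_iff_of_nonneg (fun j _ =>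
    Finset.sum_nonneg fun k _ => Complex.normSq_nonneg _)).mp h'
  ext k j
  have hj := this j (Finset.mem_univ j)
  have := (Finset.sum_eq_zero_iff_of_nonneg (fun k _ => Complex.normSq_nonneg _)).mp hj k
    (Finset.mem_univ k)
  simpa [Complex.normSq_eq_zero] using this

lemma proj_orth {d : ℕ} {A : Fin d → Matrix (Fin d) (Fin d) ℂ}
    (hAherm : ∀ i, (A i).IsHermitian) (hAproj : ∀ i, A i * A i = A i)
    (hAsum : ∑ i, A i = 1) {i j : Fin d} (hij : j ≠ i) : A j * A i = 0 := by
  classical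
  -- ∑_{j ≠ i} A i * A j * A i = 0
  set C : Fin d → Matrix (Fin d) (Fin d) ℂ := fun j => A j * A i with hC
  have hCt : ∀ j, (C j)ᴴ * C j = A i * A j * A i := by
    intro j
    rw [hC]
    simp only [Matrix.conjTranspose_mul, (hAherm i).eq, (hAherm j).eq]
    calc A i * A j * (A j * A i) = A i * (A j * A j) * A i := by noncomm_ring
      _ = A i * A j * A i := by rw [hAproj]
  have hsum0 : ∑ j ∈ Finset.univ.erase i, (C j)ᴴ * C j = 0 := by
    have h1 : ∑ j ∈ Finset.univ.erase i, A i * A j * A i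
        = A i * (∑ j ∈ Finset.univ.erase i, A j) * A i := by
      rw [Finset.mul_sum, Finset.sum_mul]
    have h2 : ∑ j ∈ Finset.univ.erase i, A j = 1 - A i := by
      have := Finset.add_sum_erase Finset.univ A (Finset.mem_univ i)
      rw [hAsum] at this
      have : ∑ x ∈ Finset.univ.erase i, A x = 1 - A i := by
        rw [← this]; abel
      exact this
    simp only [hCt, h1, h2]
    calc A i * (1 - A i) * A i = A i * A i - A i * A i * A i := by noncomm_ring
      _ = 0 := by rw [hAproj, hAproj]; simp
  -- each trace is nonneg, sum of traces is zero, so each is zero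
  have htr : ∀ j ∈ Finset.univ.erase i, ((C j)ᴴ * C j).trace = 0 := by
    have hsum : ∑ j ∈ Finset.univ.erase i, ((C j)ᴴ * C j).trace = 0 := by
      rw [← Matrix.trace_sum, hsum0, Matrix.trace_zero]
    refine (Finset.sum_eq_zero_iff_of_nonneg fun j _ => ?_).mp hsum
    exact psd_trace_nonneg (Matrix.posSemidef_conjTranspose_mul_self _)
  have := htr j (Finset.mem_erase.mpr ⟨hij, Finset.mem_univ j⟩)
  exact trace_ctc_eq_zero this

/-- The operational quasiprobability as a function of the state. -/
noncomputable def qOQ (d : ℕ) (A B : Fin d → Matrix (Fin d) (Fin d) ℂ)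
    (ρ : Matrix (Fin d) (Fin d) ℂ) (i f : Fin d) : ℂ :=
  (A i * ρ * A i * B f).trace +
    (1 / (d : ℂ)) * ((ρ * B f).trace - ∑ i', (A i' * ρ * A i' * B f).trace)

/-- The negativity of the OQ of a state. -/
noncomputable def negOQ (d : ℕ) (A B : Fin d → Matrix (Fin d) (Fin d) ℂ)
    (ρ : Matrix (Fin d) (Fin d) ℂ) : ℝ :=
  (∑ i, ∑ f, ‖qOQ d A B ρ i f‖) - 1

lemma qOQ_lin {d : ℕ} (A B : Fin d → Matrix (Fin d) (Fin d) ℂ)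
    (a b : ℂ) (ρ σ : Matrix (Fin d) (Fin d) ℂ) (i f : Fin d) :
    qOQ d A B (a • ρ + b • σ) i f = a * qOQ d A B ρ i f + b * qOQ d A B σ i f := by
  simp only [qOQ, Matrix.add_mul, Matrix.mul_add, Matrix.smul_mul, Matrix.mul_smul,
    Matrix.trace_add, Matrix.trace_smul, smul_eq_mul, Finset.sum_add_distrib,
    ← Finset.mul_sum]
  ring

lemma qOQ_sum {d : ℕ} (hd : 0 < d) (A B : Fin d → Matrix (Fin d) (Fin d) ℂ)
    (hBsum : ∑ f, B f = 1) (ρ : Matrix (Fin d) (Fin d) ℂ) (hρtr : ρ.trace = 1) :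
    ∑ i, ∑ f, qOQ d A B ρ i f = 1 := by
  have key : ∀ M : Matrix (Fin d) (Fin d) ℂ, ∑ f, (M * B f).trace = M.trace := by
    intro M
    rw [← Matrix.trace_sum, ← Finset.mul_sum, hBsum, Matrix.mul_one]
  have hdne : (d : ℂ) ≠ 0 := Nat.cast_ne_zero.mpr hd.ne'
  have hinner : ∀ i, ∑ f, qOQ d A B ρ i f
      = (A i * ρ * A i).trace
        + (1 / (d : ℂ)) * (1 - ∑ i', (A i' * ρ * A i').trace) := by
    intro i
    have hswap : ∑ f, ∑ i', (A i' * ρ * A i' * B f).trace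
        = ∑ i', (A i' * ρ * A i').trace := by
      rw [Finset.sum_comm]; exact Finset.sum_congr rfl fun i' _ => key _
    simp only [qOQ, Finset.sum_add_distrib, Finset.sum_sub_distrib, key, hρtr,
      ← Finset.mul_sum, hswap]
  simp only [hinner]
  rw [Finset.sum_add_distrib, Finset.sum_const, Finset.card_univ, Fintype.card_fin]
  rw [nsmul_eq_mul]
  field_simp
  ring

lemma qOQ_dephased {d : ℕ} (A B : Fin d → Matrix (Fin d) (Fin d) ℂ)
    (hAherm : ∀ i, (A i).IsHermitian) (hAproj : ∀ i, A i * A i = A i)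
    (hAsum : ∑ i, A i = 1) (ρ : Matrix (Fin d) (Fin d) ℂ) (i f : Fin d) :
    qOQ d A B (∑ j, A j * ρ * A j) i f = (A i * ρ * A i * B f).trace := by
  classical
  have horth : ∀ j k : Fin d, j ≠ k → A j * A k = 0 := fun j k h =>
    proj_orth hAherm hAproj hAsum h
  have hD1 : ∀ k, A k * (∑ j, A j * ρ * A j) * A k = A k * ρ * A k := by
    intro k
    rw [Finset.mul_sum, Finset.sum_mul]
    rw [Finset.sum_eq_single k]
    · calc A k * (A k * ρ * A k) * A k = (A k * A k) * ρ * (A k * A k) := by noncomm_ring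
        _ = A k * ρ * A k := by rw [hAproj]
    · intro j _ hj
      have h1 : A k * (A j * ρ * A j) * A k = (A k * A j) * ρ * (A j * A k) := by noncomm_ring
      rw [h1, horth k j (Ne.symm hj), horth j k hj]
      simp
    · intro h; exact absurd (Finset.mem_univ k) h
  have hD2 : ∑ k, A k * (∑ j, A j * ρ * A j) * A k = ∑ j, A j * ρ * A j :=
    Finset.sum_congr rfl fun k _ => hD1 k
  simp only [qOQ]
  have e1 : ∀ k, (A k * (∑ j, A j * ρ * A j) * A k * B f).trace
      = (A k * ρ * A k * B f).trace := by intro k; rw [hD1]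
  rw [e1 i]
  have e2 : ∑ k, (A k * (∑ j, A j * ρ * A j) * A k * B f).trace
      = ((∑ j, A j * ρ * A j) * B f).trace := by
    rw [← Matrix.trace_sum, ← Finset.sum_mul, hD2]
  rw [e2]
  simp

lemma qOQ_dephased_nonneg {d : ℕ} (A B : Fin d → Matrix (Fin d) (Fin d) ℂ)
    (hAherm : ∀ i, (A i).IsHermitian) (hBpos : ∀ f, (B f).PosSemidef)
    {ρ : Matrix (Fin d) (Fin d) ℂ} (hρ : ρ.PosSemidef) (i f : Fin d) :
    0 ≤ (A i * ρ * A i * B f).trace := by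
  have hX : (A i * ρ * A i).PosSemidef := by
    have := hρ.mul_mul_conjTranspose_same (A i)
    rwa [(hAherm i).eq] at this
  exact psd_trace_mul_nonneg hX (hBpos f)

theorem oq_negativity_decoherence_monotone (d : ℕ) (hd : 0 < d)
    (ρ : Matrix (Fin d) (Fin d) ℂ) (hρ : ρ.PosSemidef) (hρtr : ρ.trace = 1)
    (A : Fin d → Matrix (Fin d) (Fin d) ℂ)
    (hAherm : ∀ i, (A i).IsHermitian) (hAproj : ∀ i, A i * A i = A i)
    (hAsum : ∑ i, A i = 1)
    (B : Fin d → Matrix (Fin d) (Fin d) ℂ)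
    (hBpos : ∀ f, (B f).PosSemidef) (hBsum : ∑ f, B f = 1)
    (s : ℝ) (hs0 : 0 ≤ s) (hs1 : s ≤ 1) :
    negOQ d A B (((1 - s : ℝ) : ℂ) • ρ + ((s : ℝ) : ℂ) • ∑ i, A i * ρ * A i)
      ≤ negOQ d A B ρ := by
  classical
  set Dρ := ∑ i, A i * ρ * A i with hDρ
  -- trace of Dρ is 1
  have hDtr : Dρ.trace = 1 := by
    rw [hDρ, Matrix.trace_sum]
    have : ∀ i, (A i * ρ * A i).trace = (A i * ρ).trace := by
      intro i
      rw [Matrix.trace_mul_cycle, hAproj]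
    simp only [this]
    rw [← Matrix.trace_sum]
    have : ∑ i, A i * ρ = (∑ i, A i) * ρ := (Finset.sum_mul _ _ _).symm
    rw [this, hAsum, Matrix.one_mul, hρtr]
  -- sums of q are 1
  have hSρ : ∑ i, ∑ f, qOQ d A B ρ i f = 1 := qOQ_sum hd A B hBsum ρ hρtr
  have hSD : ∑ i, ∑ f, qOQ d A B Dρ i f = 1 := qOQ_sum hd A B hBsum Dρ hDtr
  -- the absolute sum for ρ is ≥ 1
  have habsρ : (1 : ℝ) ≤ ∑ i, ∑ f, ‖qOQ d A B ρ i f‖ := by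
    calc (1:ℝ) = ‖∑ i, ∑ f, qOQ d A B ρ i f‖ := by rw [hSρ]; simp
      _ ≤ ∑ i, ∑ f, ‖qOQ d A B ρ i f‖ := by
          refine le_trans (norm_sum_le _ _) ?_
          exact Finset.sum_le_sum fun i _ => norm_sum_le _ _
  -- the absolute sum for Dρ is exactly 1
  have habsD : ∑ i, ∑ f, ‖qOQ d A B Dρ i f‖ = 1 := by
    have hnn : ∀ i f, 0 ≤ qOQ d A B Dρ i f := by
      intro i f
      rw [hDρ, qOQ_dephased A B hAherm hAproj hAsum]
      exact qOQ_dephased_nonneg A B hAherm hBpos hρ i f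
    have : ∀ i f, (‖qOQ d A B Dρ i f‖ : ℝ) = (qOQ d A B Dρ i f).re := by
      intro i f
      obtain ⟨hre, him⟩ := Complex.nonneg_iff.mp (hnn i f)
      rw [Complex.norm_def, Complex.normSq_apply, ← him]
      simp [Real.sqrt_mul_self hre]
    simp only [this]
    have : (∑ i, ∑ f, (qOQ d A B Dρ i f).re) = (∑ i, ∑ f, qOQ d A B Dρ i f).re := by
      simp [Complex.re_sum]
    rw [this, hSD]
    simp
  -- convexity
  have hconv : ∑ i, ∑ f, ‖qOQ d A B (((1 - s : ℝ) : ℂ) • ρ + ((s : ℝ) : ℂ) • Dρ) i f‖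
      ≤ (1 - s) * (∑ i, ∑ f, ‖qOQ d A B ρ i f‖)
        + s * (∑ i, ∑ f, ‖qOQ d A B Dρ i f‖) := by
    have : ∀ i f, ‖qOQ d A B (((1 - s : ℝ) : ℂ) • ρ + ((s : ℝ) : ℂ) • Dρ) i f‖
        ≤ (1 - s) * ‖qOQ d A B ρ i f‖ + s * ‖qOQ d A B Dρ i f‖ := by
      intro i f
      rw [qOQ_lin]
      refine le_trans (norm_add_le _ _) ?_
      simp only [norm_mul, Complex.norm_real, Real.norm_eq_abs]
      rw [abs_of_nonneg (by linarith), abs_of_nonneg hs0]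
    calc ∑ i, ∑ f, ‖qOQ d A B (((1 - s : ℝ) : ℂ) • ρ + ((s : ℝ) : ℂ) • Dρ) i f‖
        ≤ ∑ i, ∑ f, ((1 - s) * ‖qOQ d A B ρ i f‖
            + s * ‖qOQ d A B Dρ i f‖) :=
          Finset.sum_le_sum fun i _ => Finset.sum_le_sum fun f _ => this i f
      _ = (1 - s) * (∑ i, ∑ f, ‖qOQ d A B ρ i f‖)
            + s * (∑ i, ∑ f, ‖qOQ d A B Dρ i f‖) := by
          simp [Finset.sum_add_distrib, Finset.mul_sum]
  rw [habsD] at hconv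
  unfold negOQ
  have h2 : (1 - s) * (∑ i, ∑ f, ‖qOQ d A B ρ i f‖) + s * 1
      ≤ ∑ i, ∑ f, ‖qOQ d A B ρ i f‖ := by nlinarith
  linarith [le_trans hconv h2]
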